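/- Let 0 ≤ l ≤ n and let 1 ≤ i_1 < ⋯ < i_l ≤ n and 1 ≤ j_1 < ⋯ < j_{n−l} ≤ n be two sequences such that {1, …, n} = {i_1, …, i_l} ∪ {j_1, …, j_{n−l}}. Then (r_{i_1} ⋯ r_{i_l})^{−1}(i_k) = k − l − 1 for all 1 ≤ k ≤ l, and (r_{i_1} ⋯ r_{i_l})^{−1}(j_k) = l + k for all 1 ≤ k ≤ n−l. -/

import Mathlib

/-!
Common setup: the Weyl group `W n` of type `B_n`, realized as the group of
permutations `w` of `I_n = {±1, …, ±n}` (inside `Equiv.Perm ℤ`, fixing every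
integer of absolute value `> n`) such that `w (-i) = - w i` for all `i`.
-/

namespace TypeB

/-- The generator `t = (1, -1)`. -/
def t : Equiv.Perm ℤ := Equiv.swap 1 (-1)

/-- The generator `s i = (i, i+1)(-i, -(i+1))` (meaningful for `1 ≤ i`). -/
def s (i : ℕ) : Equiv.Perm ℤ :=
  Equiv.swap (i : ℤ) ((i : ℤ) + 1) * Equiv.swap (-(i : ℤ)) (-((i : ℤ) + 1))

/-- The generating set `S_n = {t, s_1, …, s_{n-1}}`. -/
def gens (n : ℕ) : Set (Equiv.Perm ℤ) :=
  {t} ∪ {x | ∃ i : ℕ, 1 ≤ i ∧ i < n ∧ x = s i}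

/-- The Weyl group `W_n` of type `B_n`, as a subgroup of `Equiv.Perm ℤ`:
permutations `w` with `w (-i) = - (w i)` for all `i` and fixing all `i` with `|i| > n`. -/
def W (n : ℕ) : Subgroup (Equiv.Perm ℤ) where
  carrier := {w | (∀ i : ℤ, w (-i) = - w i) ∧ ∀ i : ℤ, (n : ℤ) < |i| → w i = i}
  one_mem' := ⟨fun _ => rfl, fun _ _ => rfl⟩
  mul_mem' := by
    rintro u v ⟨hu1, hu2⟩ ⟨hv1, hv2⟩
    refine ⟨fun i => ?_, fun i hi => ?_⟩
    · simp only [Equiv.Perm.mul_apply, hv1, hu1]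
    · simp only [Equiv.Perm.mul_apply, hv2 i hi, hu2 i hi]
  inv_mem' := by
    rintro u ⟨hu1, hu2⟩
    refine ⟨fun i => ?_, fun i hi => ?_⟩
    · apply u.injective
      rw [(show ∀ x, u (u⁻¹ x) = x from fun x => u.apply_symm_apply x), hu1, (show ∀ x, u (u⁻¹ x) = x from fun x => u.apply_symm_apply x)]
    · apply u.injective
      rw [(show ∀ x, u (u⁻¹ x) = x from fun x => u.apply_symm_apply x), hu2 i hi]

/-- The length of `w` with respect to the generating set `S_n`. -/
noncomputable def len (n : ℕ) (w : Equiv.Perm ℤ) : ℕ :=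
  sInf {k | ∃ l : List (Equiv.Perm ℤ), (∀ x ∈ l, x ∈ gens n) ∧ l.prod = w ∧ l.length = k}

/-- `l` is a reduced expression for `w` with respect to `S_n`. -/
def IsReduced (n : ℕ) (w : Equiv.Perm ℤ) (l : List (Equiv.Perm ℤ)) : Prop :=
  (∀ x ∈ l, x ∈ gens n) ∧ l.prod = w ∧ l.length = len n w

/-- `ℓ_t w`: the number of occurrences of `t` in a reduced expression of `w`
(independent of the chosen reduced expression). -/
noncomputable def lent (n : ℕ) (w : Equiv.Perm ℤ) : ℕ :=
  letI : DecidableEq (Equiv.Perm ℤ) := Classical.decEq _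
  sInf {m | ∃ l, IsReduced n w l ∧ l.count t = m}

/-- `r 1 = t` and `r (i+1) = s i * r i`. -/
def r : ℕ → Equiv.Perm ℤ
  | 0 => 1
  | 1 => t
  | (i + 2) => s (i + 1) * r (i + 1)

/-- `t_1 = t` and `t_{i+1} = s_i * t_i * s_i`. -/
def tperm : ℕ → Equiv.Perm ℤ
  | 0 => 1
  | 1 => t
  | (i + 2) => s (i + 1) * tperm (i + 1) * s (i + 1)

/-- `a l = r 1 * r 2 * ⋯ * r l`, with `a 0 = 1`. -/
def a : ℕ → Equiv.Perm ℤ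
  | 0 => 1
  | (l + 1) => a l * r (l + 1)

/-- The symmetric group `𝔖_n`: the subgroup generated by `s_1, …, s_{n-1}`. -/
def Sym (n : ℕ) : Subgroup (Equiv.Perm ℤ) :=
  Subgroup.closure {x | ∃ i : ℕ, 1 ≤ i ∧ i < n ∧ x = s i}

/-- The parabolic subgroup `𝔖_{l,n-l}`: generated by `{s_1, …, s_{n-1}} \ {s_l}`. -/
def SymP (n l : ℕ) : Subgroup (Equiv.Perm ℤ) :=
  Subgroup.closure {x | ∃ i : ℕ, 1 ≤ i ∧ i < n ∧ i ≠ l ∧ x = s i}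

/-- `Y_{l,n-l}`: elements of `𝔖_n` of minimal length in their coset `w 𝔖_{l,n-l}`. -/
def Y (n l : ℕ) : Set (Equiv.Perm ℤ) :=
  {w | w ∈ Sym n ∧ ∀ u ∈ SymP n l, len n w ≤ len n (w * u)}

/-- The subgroup `𝔖_{[i,j]}` generated by `s_i, …, s_{j-1}`. -/
def SymI (i j : ℕ) : Subgroup (Equiv.Perm ℤ) :=
  Subgroup.closure {x | ∃ k : ℕ, i ≤ k ∧ k < j ∧ x = s k}

/-- The function reversing the interval `[i,j]` (and `[-j,-i]`), for `1 ≤ i`. -/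
def revFun (i j : ℤ) : ℤ → ℤ := fun k =>
  if 1 ≤ i ∧ i ≤ k ∧ k ≤ j then i + j - k
  else if 1 ≤ i ∧ -j ≤ k ∧ k ≤ -i then -(i + j) - k
  else k

lemma revFun_involutive (i j : ℤ) : Function.Involutive (revFun i j) := by
  intro k
  unfold revFun
  split_ifs <;> omega

/-- `σ_{[i,j]}`: the longest element of `𝔖_{[i,j]}`, i.e. the order-reversing
permutation of the interval `[i,j]` (extended to `I_n` by `w(-k) = -w(k)`). -/
def sigmaI (i j : ℕ) : Equiv.Perm ℤ := (revFun_involutive (i : ℤ) (j : ℤ)).toPerm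

/-- `σ_{l,n-l}`: the longest element of `𝔖_{l,n-l} = 𝔖_{[1,l]} × 𝔖_{[l+1,n]}`. -/
def sigmaLL (n l : ℕ) : Equiv.Perm ℤ := sigmaI 1 l * sigmaI (l + 1) n

/-- The function negating all `k` with `|k| ≤ n`. -/
def negnFun (n : ℤ) : ℤ → ℤ := fun k => if -n ≤ k ∧ k ≤ n then -k else k

lemma negnFun_involutive (n : ℤ) : Function.Involutive (negnFun n) := by
  intro k
  unfold negnFun
  split_ifs <;> omega

/-- `w_n`: the longest element of `W_n`; as a permutation, `w_n i = -i` for `|i| ≤ n`. -/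
def wlong (n : ℕ) : Equiv.Perm ℤ := (negnFun_involutive (n : ℤ)).toPerm

/-- `c_I = s_{i_1} s_{i_2} ⋯ s_{i_k}` for `I = {i_1 < i_2 < ⋯ < i_k}`. -/
def cElt (I : Finset ℕ) : Equiv.Perm ℤ := ((I.sort (· ≤ ·)).map s).prod

/-- `d_I = s_{i_k} ⋯ s_{i_2} s_{i_1}` for `I = {i_1 < i_2 < ⋯ < i_k}`. -/
def dElt (I : Finset ℕ) : Equiv.Perm ℤ := (((I.sort (· ≤ ·)).map s).reverse).prod

/-- `X_n^{(m)}`: elements of `W_n` of minimal length in their coset `w W_m`. -/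
def X (n m : ℕ) : Set (Equiv.Perm ℤ) :=
  {w | w ∈ W n ∧ ∀ u ∈ W m, len n w ≤ len n (w * u)}

/-- Bruhat order: `x ≤ y` iff some reduced expression of `y` contains a subword
which is a reduced expression of `x`. -/
def BruhatLE (n : ℕ) (x y : Equiv.Perm ℤ) : Prop :=
  ∃ ly, IsReduced n y ly ∧ ∃ lx, lx.Sublist ly ∧ IsReduced n x lx

/-- Strict Bruhat order. -/
def BruhatLT (n : ℕ) (x y : Equiv.Perm ℤ) : Prop := BruhatLE n x y ∧ x ≠ y

/-- `D_i(W_n)`: the set of `x` such that exactly one of `s_i, s_{i+1}` is a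
(right) descent of `x`. -/
def Dset (n i : ℕ) : Set (Equiv.Perm ℤ) :=
  {x | Xor' (len n (x * s i) < len n x) (len n (x * s (i + 1)) < len n x)}

open Classical in
/-- `γ_i x`: the unique element of `{x s_i, x s_{i+1}} ∩ D_i(W_n)` (for `x ∈ D_i(W_n)`). -/
noncomputable def gamma (n i : ℕ) (x : Equiv.Perm ℤ) : Equiv.Perm ℤ :=
  if x * s i ∈ Dset n i then x * s i else x * s (i + 1)

/-- `E_m^{(r)}`: the set of `w ∈ W_m` such that `|w 1| > |w i|` for `2 ≤ i ≤ r+2`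
and `(w 2, …, w (r+2))` is a shuffle of a positive decreasing sequence and a
negative increasing sequence. -/
def E (m ρ : ℕ) : Set (Equiv.Perm ℤ) :=
  {w | w ∈ W m ∧ (∀ i : ℕ, 2 ≤ i → i ≤ ρ + 2 → |w (i : ℤ)| < |w (1 : ℤ)|) ∧
    ∀ i j : ℕ, 2 ≤ i → i < j → j ≤ ρ + 2 →
      (0 < w (i : ℤ) → 0 < w (j : ℤ) → w (j : ℤ) < w (i : ℤ)) ∧
      (w (i : ℤ) < 0 → w (j : ℤ) < 0 → w (i : ℤ) < w (j : ℤ))}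

/-- The product `r_{i_1} ⋯ r_{i_l}` for a sequence `i : Fin l → ℕ`. -/
def prodR {l : ℕ} (i : Fin l → ℕ) : Equiv.Perm ℤ := (List.ofFn fun k => r (i k)).prod

/-- `(l, α, β, σ)` is a decomposition of `w` as in the decomposition lemma:
`l ≤ n`, `α, β ∈ Y_{l,n-l}`, `σ ∈ 𝔖_{l,n-l}` and `w = α a_l σ β⁻¹`. -/
def IsDecomp (n : ℕ) (w : Equiv.Perm ℤ) (l : ℕ) (α β σ : Equiv.Perm ℤ) : Prop :=
  l ≤ n ∧ α ∈ Y n l ∧ β ∈ Y n l ∧ σ ∈ SymP n l ∧ w = α * a l * σ * β⁻¹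


def sFun (i : ℕ) : ℤ → ℤ := fun x =>
  if x = (i:ℤ) then (i:ℤ)+1 else if x = (i:ℤ)+1 then (i:ℤ)
  else if x = -(i:ℤ) then -((i:ℤ)+1) else if x = -((i:ℤ)+1) then (-(i:ℤ)) else x

lemma s_apply (i : ℕ) (hi : 1 ≤ i) (x : ℤ) : s i x = sFun i x := by
  have hi' : (1:ℤ) ≤ (i:ℤ) := by exact_mod_cast hi
  simp only [s, sFun, Equiv.Perm.mul_apply, Equiv.swap_apply_def]
  split_ifs <;> omega

def rFun (a : ℕ) : ℤ → ℤ := fun x =>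
  if x = 1 then -(a:ℤ) else if 2 ≤ x ∧ x ≤ (a:ℤ) then x - 1
  else if x = -1 then (a:ℤ) else if -(a:ℤ) ≤ x ∧ x ≤ -2 then x + 1 else x

lemma r_apply : ∀ (a : ℕ), 1 ≤ a → ∀ (x : ℤ), r a x = rFun a x
  | 1, _, x => by
      simp only [r, t, rFun, Equiv.swap_apply_def]
      norm_num
      split_ifs <;> omega
  | (a+2), _, x => by
      have ih := r_apply (a+1) (by omega) x
      show (s (a+1) * r (a+1)) x = _
      rw [Equiv.Perm.mul_apply, ih, s_apply (a+1) (by omega)]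
      simp only [sFun, rFun]
      push_cast
      split_ifs <;> omega

lemma inv_eq (w : Equiv.Perm ℤ) (x y : ℤ) (h : w y = x) : w⁻¹ x = y := by
  rw [← h]; simp

lemma length_le_of_nodup (L : List ℕ) (hnd : L.Nodup) (lo hi : ℕ)
    (h : ∀ x ∈ L, lo ≤ x ∧ x < hi) : L.length ≤ hi - lo := by
  classical
  have hsub : L.toFinset ⊆ Finset.Ico lo hi := by
    intro x hx
    simp only [List.mem_toFinset] at hx
    exact Finset.mem_Ico.mpr (h x hx)
  calc L.length = L.toFinset.card := (List.toFinset_card_of_nodup hnd).symm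
    _ ≤ (Finset.Ico lo hi).card := Finset.card_le_card hsub
    _ = hi - lo := Nat.card_Ico lo hi

lemma aux (L : List ℕ) (hp : L.Pairwise (· < ·)) (h1 : ∀ x ∈ L, 1 ≤ x) :
    (∀ (k : ℕ) (hk : k < L.length),
      ((L.map r).prod)⁻¹ ((L[k]'hk : ℕ) : ℤ) = (k : ℤ) - L.length) ∧
    (∀ m : ℕ, 1 ≤ m → m ∉ L →
      ((L.map r).prod)⁻¹ (m : ℤ)
        = (m : ℤ) + ((L.filter (fun x => decide (m < x))).length : ℤ)) := by
  induction L using List.reverseRecOn with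
  | nil => simp
  | append_singleton L a ih =>
    have hpa := List.pairwise_append.mp hp
    have hpL : L.Pairwise (· < ·) := hpa.1
    have hla : ∀ x ∈ L, x < a := fun x hx => hpa.2.2 x hx a (by simp)
    have h1L : ∀ x ∈ L, 1 ≤ x := fun x hx => h1 x (by simp [hx])
    have ha1 : 1 ≤ a := h1 a (by simp)
    have hnd : L.Nodup := hpL.imp (fun h => Nat.ne_of_lt h)
    have hlen : L.length < a := by
      have := length_le_of_nodup L hnd 1 a (fun x hx => ⟨h1L x hx, hla x hx⟩)
      omega
    obtain ⟨IH1, IH2⟩ := ih hpL h1L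
    have hna : a ∉ L := fun h => lt_irrefl a (hla a h)
    have hwa : ((L.map r).prod)⁻¹ (a : ℤ) = (a : ℤ) := by
      have := IH2 a ha1 hna
      rw [List.filter_eq_nil_iff.mpr (fun x hx => by simp [Nat.not_lt.mpr (le_of_lt (hla x hx))])] at this
      simpa using this
    have hprod : (((L ++ [a]).map r).prod)⁻¹ = (r a)⁻¹ * ((L.map r).prod)⁻¹ := by
      simp [List.map_append, List.prod_append, mul_inv_rev]
    constructor
    · intro k hk
      rw [hprod, Equiv.Perm.mul_apply]
      rcases Nat.lt_or_ge k L.length with hkl | hkl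
      · rw [List.getElem_append_left hkl, IH1 k hkl]
        apply inv_eq
        rw [r_apply a ha1]
        simp only [rFun, List.length_append, List.length_singleton]
        split_ifs <;> omega
      · have hk' : k = L.length := by
          simp only [List.length_append, List.length_singleton] at hk; omega
        subst hk'
        have : (L ++ [a])[L.length]'hk = a := by
          simp
        rw [this, hwa]
        apply inv_eq
        rw [r_apply a ha1]
        simp only [rFun, List.length_append, List.length_singleton]
        split_ifs <;> omega
    · intro m hm1 hm
      have hmL : m ∉ L := fun h => hm (by simp [h])
      have hma : m ≠ a := fun h => hm (by simp [h])
      rw [hprod, Equiv.Perm.mul_apply, IH2 m hm1 hmL]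
      have hfil : ((L ++ [a]).filter (fun x => decide (m < x)))
          = L.filter (fun x => decide (m < x)) ++ [a].filter (fun x => decide (m < x)) :=
        List.filter_append _ _
      rcases Nat.lt_or_ge m a with hma' | hma'
      · have hca : ([a].filter (fun x => decide (m < x))) = [a] := by
          simp [hma']
        have hbound : (L.filter (fun x => decide (m < x))).length ≤ a - (m + 1) := by
          apply length_le_of_nodup _ (hnd.filter _) (m+1) a
          intro x hx
          rw [List.mem_filter] at hx
          have := hla x hx.1
          have := of_decide_eq_true hx.2
          omega
        rw [hfil, hca, List.length_append]
        apply inv_eq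
        rw [r_apply a ha1]
        simp only [rFun, List.length_singleton]
        split_ifs <;> push_cast <;> omega
      · have hca : ([a].filter (fun x => decide (m < x))) = [] := by
          simp; omega
        have hcl : (L.filter (fun x => decide (m < x))) = [] := by
          apply List.filter_eq_nil_iff.mpr
          intro x hx
          have := hla x hx
          simp; omega
        rw [hfil, hca, hcl]
        simp only [List.append_nil, List.length_nil, Nat.cast_zero, add_zero]
        apply inv_eq
        rw [r_apply a ha1]
        simp only [rFun]
        split_ifs <;> first | omega | tauto


/-- if `{1,…,n}` is the union of the values of the increasing
sequences `i_1 < ⋯ < i_l` and `j_1 < ⋯ < j_{n-l}`, then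
`(r_{i_1} ⋯ r_{i_l})⁻¹ (i_k) = k - l - 1` and `(r_{i_1} ⋯ r_{i_l})⁻¹ (j_k) = l + k`. -/
theorem stmt3 (n l : ℕ) (hl : l ≤ n)
    (i : Fin l → ℕ) (j : Fin (n - l) → ℕ)
    (hi : StrictMono i) (hj : StrictMono j)
    (hi1 : ∀ k, 1 ≤ i k ∧ i k ≤ n) (hj1 : ∀ k, 1 ≤ j k ∧ j k ≤ n)
    (hcover : ∀ m : ℕ, 1 ≤ m → m ≤ n → (∃ k, i k = m) ∨ (∃ k, j k = m)) :
    (∀ k : Fin l, (prodR i)⁻¹ (i k : ℤ) = ((k : ℕ) + 1 : ℤ) - (l : ℤ) - 1) ∧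
    (∀ k : Fin (n - l), (prodR i)⁻¹ (j k : ℤ) = (l : ℤ) + ((k : ℕ) + 1 : ℤ)) := by
  classical
  have hmap : prodR i = ((List.ofFn i).map r).prod := by
    rw [prodR, List.map_ofFn]; rfl
  set L : List ℕ := List.ofFn i with hL
  have hp : L.Pairwise (· < ·) := by
    rw [hL, List.pairwise_ofFn]
    intro a b hab; exact hi hab
  have h1 : ∀ x ∈ L, 1 ≤ x := by
    intro x hx
    rw [hL, List.mem_ofFn] at hx
    obtain ⟨k, rfl⟩ := hx
    exact (hi1 k).1
  have hnd : L.Nodup := hp.imp (fun h => Nat.ne_of_lt h)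
  obtain ⟨A1, A2⟩ := aux L hp h1
  have hlen : L.length = l := by simp [hL]
  constructor
  · intro k
    have hk : (k : ℕ) < L.length := by rw [hlen]; exact k.isLt
    have hget : L[(k:ℕ)]'hk = i k := by simp [hL]
    have h := A1 (k : ℕ) hk
    rw [hget, hlen] at h
    rw [hmap, h]
    ring
  · intro k
    set m := j k with hmdef
    have hm1 : 1 ≤ m := (hj1 k).1
    have hmn : m ≤ n := (hj1 k).2
    set A : Finset ℕ := Finset.image i Finset.univ with hA
    set B : Finset ℕ := Finset.image j Finset.univ with hB
    have hAcard : A.card = l := by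
      rw [hA, Finset.card_image_of_injective _ hi.injective]; simp
    have hBcard : B.card = n - l := by
      rw [hB, Finset.card_image_of_injective _ hj.injective]; simp
    have hUnion : A ∪ B = Finset.Icc 1 n := by
      apply Finset.Subset.antisymm
      · intro x hx
        rcases Finset.mem_union.mp hx with h | h
        · obtain ⟨q, _, rfl⟩ := Finset.mem_image.mp h
          exact Finset.mem_Icc.mpr ⟨(hi1 q).1, (hi1 q).2⟩
        · obtain ⟨q, _, rfl⟩ := Finset.mem_image.mp h
          exact Finset.mem_Icc.mpr ⟨(hj1 q).1, (hj1 q).2⟩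
      · intro x hx
        rw [Finset.mem_Icc] at hx
        rcases hcover x hx.1 hx.2 with ⟨q, hq⟩ | ⟨q, hq⟩
        · exact Finset.mem_union_left _ (Finset.mem_image.mpr ⟨q, Finset.mem_univ q, hq⟩)
        · exact Finset.mem_union_right _ (Finset.mem_image.mpr ⟨q, Finset.mem_univ q, hq⟩)
    have hinter : A ∩ B = ∅ := by
      have hcu := Finset.card_union_add_card_inter A B
      rw [hUnion, Nat.card_Icc, hAcard, hBcard] at hcu
      have : (A ∩ B).card = 0 := by omega
      exact Finset.card_eq_zero.mp this
    have hmB : m ∈ B := Finset.mem_image.mpr ⟨k, Finset.mem_univ k, rfl⟩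
    have hmA : m ∉ A := by
      intro h
      have : m ∈ A ∩ B := Finset.mem_inter.mpr ⟨h, hmB⟩
      rw [hinter] at this
      exact absurd this (Finset.notMem_empty m)
    have hmL : m ∉ L := by
      intro h
      apply hmA
      rw [hL, List.mem_ofFn] at h
      obtain ⟨q, hq⟩ := h
      exact Finset.mem_image.mpr ⟨q, Finset.mem_univ q, hq⟩
    have hBf : (B.filter (fun x => x < m)).card = (k : ℕ) := by
      rw [hB, Finset.filter_image, Finset.card_image_of_injective _ hj.injective]
      have he : (Finset.univ.filter fun q : Fin (n - l) => j q < m) = Finset.Iio k := by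
        ext q
        simp only [Finset.mem_filter, Finset.mem_univ, true_and, Finset.mem_Iio,
          hmdef, hj.lt_iff_lt]
      rw [he, Fin.card_Iio]
    have hdisj2 : Disjoint (A.filter (fun x => x < m)) (B.filter (fun x => x < m)) := by
      apply Finset.disjoint_left.mpr
      intro x hx1 hx2
      have : x ∈ A ∩ B :=
        Finset.mem_inter.mpr ⟨(Finset.mem_filter.mp hx1).1, (Finset.mem_filter.mp hx2).1⟩
      rw [hinter] at this
      exact absurd this (Finset.notMem_empty x)
    have hsplit : (A.filter (fun x => x < m)) ∪ (B.filter (fun x => x < m))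
        = Finset.Icc 1 (m - 1) := by
      rw [← Finset.filter_union, hUnion]
      ext x
      simp only [Finset.mem_filter, Finset.mem_Icc]
      omega
    have hD : (A.filter (fun x => x < m)).card + (k : ℕ) = m - 1 := by
      have hcu := Finset.card_union_of_disjoint hdisj2
      rw [hsplit, Nat.card_Icc, hBf] at hcu
      omega
    have hAsplit : A.filter (fun x => x < m) ∪ A.filter (fun x => m < x) = A := by
      ext x
      simp only [Finset.mem_union, Finset.mem_filter]
      constructor
      · rintro (⟨h, _⟩ | ⟨h, _⟩) <;> exact h
      · intro hx
        rcases Nat.lt_or_ge x m with h | h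
        · exact Or.inl ⟨hx, h⟩
        · refine Or.inr ⟨hx, lt_of_le_of_ne h ?_⟩
          intro e
          exact hmA (e ▸ hx)
    have hAdisj : Disjoint (A.filter (fun x => x < m)) (A.filter (fun x => m < x)) := by
      apply Finset.disjoint_left.mpr
      intro x hx1 hx2
      have h1' := (Finset.mem_filter.mp hx1).2
      have h2' := (Finset.mem_filter.mp hx2).2
      omega
    have hC : (A.filter (fun x => x < m)).card + (A.filter (fun x => m < x)).card = l := by
      have hcu := Finset.card_union_of_disjoint hAdisj
      rw [hAsplit, hAcard] at hcu
      omega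
    have hLA : L.toFinset = A := by
      ext x
      simp only [List.mem_toFinset, hL, List.mem_ofFn, hA, Finset.mem_image,
        Finset.mem_univ, true_and, Set.mem_range]
    have hfilterlen : (L.filter (fun x => decide (m < x))).length
        = (A.filter (fun x => m < x)).card := by
      rw [← List.toFinset_card_of_nodup (hnd.filter _), List.toFinset_filter]
      congr 1
      rw [← hLA]
      apply Finset.filter_congr
      intro x _
      simp
    have h2 := A2 m hm1 hmL
    rw [hmap, h2, hfilterlen]
    have hkn : (k : ℕ) < n - l := k.isLt
    omega


end TypeB
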